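/- Let p : E ⥤ B be a Grothendieck fibration between categories with terminal objects such that p preserves the terminal object. Then for every morphism f : x ⟶ y in E, f is p-cartesian if and only if the naturality square with top f, bottom p(f), and vertical maps the unit components η_x : x ⟶ i(p(x)) and η_y : y ⟶ i(p(y)) of the adjunction p ⊣ i (where i is a fully faithful right adjoint of p), is a pullback square in E. -/
import Mathlib


open CategoryTheory CategoryTheory.Limits

def StronglyCartesian {E B : Type*} [Category E] [Category B] (p : E ⥤ B)
    {x' x : E} (f : x' ⟶ x) : Prop :=
  ∀ {z : E} (g : z ⟶ x) (h : p.obj z ⟶ p.obj x'),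
    p.map g = h ≫ p.map f → ∃! k : z ⟶ x', p.map k = h ∧ k ≫ f = g

def GrothFibration {E B : Type*} [Category E] [Category B] (p : E ⥤ B) : Prop :=
  ∀ (x : E) {b : B} (h : b ⟶ p.obj x), ∃ (x' : E) (f : x' ⟶ x) (e : p.obj x' = b),
    StronglyCartesian p f ∧ p.map f = eqToHom e ≫ h

/-- For a terminal-object-preserving Grothendieck fibration `p` with fully faithful
right adjoint `i`, a morphism `f` is `p`-cartesian iff its unit naturality square is a
pullback: the induced factorization system is simple. -/
theorem cartesian_iff_unit_square_pullback {E B : Type*} [Category E] [Category B]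
    [HasTerminal E] [HasTerminal B]
    (p : E ⥤ B) (hp : GrothFibration p) (ht : IsTerminal (p.obj (⊤_ E)))
    (i : B ⥤ E) [i.Full] [i.Faithful] (adj : p ⊣ i)
    {x y : E} (f : x ⟶ y) :
    StronglyCartesian p f ↔
      IsPullback (adj.unit.app x) f (i.map (p.map f)) (adj.unit.app y) := by
  have nat : ∀ {a b : E} (k : a ⟶ b),
      adj.unit.app a ≫ i.map (p.map k) = k ≫ adj.unit.app b := fun k => by
    simpa using adj.unit_naturality k
  have comm : adj.unit.app x ≫ i.map (p.map f) = f ≫ adj.unit.app y := nat f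
  -- `η_z ≫ i.map u` determines `u`
  have inj : ∀ {z : E} (u v : p.obj z ⟶ p.obj x),
      adj.unit.app z ≫ i.map u = adj.unit.app z ≫ i.map v → u = v := by
    intro z u v huv
    apply (adj.homEquiv z (p.obj x)).injective
    simpa [Adjunction.homEquiv_unit] using huv
  constructor
  · intro hf
    have cond : ∀ (s : PullbackCone (i.map (p.map f)) (adj.unit.app y)),
        p.map s.snd = (p.map s.fst ≫ adj.counit.app (p.obj x)) ≫ p.map f := by
      intro s
      have h1 := congrArg (fun u : s.pt ⟶ i.obj (p.obj y) =>
        p.map u ≫ adj.counit.app (p.obj y)) s.condition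
      simp only [Functor.map_comp, Category.assoc, adj.counit_naturality,
        Adjunction.left_triangle_components, Category.comp_id] at h1
      simpa [Category.assoc] using h1.symm
    refine IsPullback.of_isLimit' ⟨comm⟩ (PullbackCone.IsLimit.mk _ ?_ ?_ ?_ ?_)
    · intro s
      exact (hf s.snd (p.map s.fst ≫ adj.counit.app (p.obj x)) (cond s)).choose
    · intro s
      obtain ⟨hk1, hk2⟩ :=
        (hf s.snd (p.map s.fst ≫ adj.counit.app (p.obj x)) (cond s)).choose_spec.1
      refine Eq.trans (nat _).symm ?_
      rw [hk1]
      calc adj.unit.app s.pt ≫ i.map (p.map s.fst ≫ adj.counit.app (p.obj x))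
          = (adj.unit.app s.pt ≫ i.map (p.map s.fst)) ≫ i.map (adj.counit.app (p.obj x)) := by
            simp [Functor.map_comp]
        _ = s.fst ≫ adj.unit.app (i.obj (p.obj x)) ≫ i.map (adj.counit.app (p.obj x)) := by
            rw [nat s.fst, Category.assoc]; rfl
        _ = s.fst := by rw [Adjunction.right_triangle_components]; simp
    · intro s
      exact (hf s.snd (p.map s.fst ≫ adj.counit.app (p.obj x)) (cond s)).choose_spec.1.2
    · intro s m hm1 hm2
      apply (hf s.snd (p.map s.fst ≫ adj.counit.app (p.obj x)) (cond s)).choose_spec.2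
      refine ⟨?_, hm2⟩
      apply inj
      refine Eq.trans (nat m) (Eq.trans hm1 ?_)
      calc s.fst = s.fst ≫ adj.unit.app (i.obj (p.obj x)) ≫ i.map (adj.counit.app (p.obj x)) := by
            rw [Adjunction.right_triangle_components]; simp
        _ = (adj.unit.app s.pt ≫ i.map (p.map s.fst)) ≫ i.map (adj.counit.app (p.obj x)) := by
            rw [nat s.fst, Category.assoc]; rfl
        _ = adj.unit.app s.pt ≫ i.map (p.map s.fst ≫ adj.counit.app (p.obj x)) := by
            simp [Functor.map_comp]
  · intro hpb
    intro z g h hgh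
    have key : (adj.unit.app z ≫ i.map h) ≫ i.map (p.map f) = g ≫ adj.unit.app y := by
      rw [Category.assoc, ← Functor.map_comp, ← hgh, nat g]
    refine ⟨hpb.lift (adj.unit.app z ≫ i.map h) g key, ⟨?_, hpb.lift_snd _ _ _⟩, ?_⟩
    · apply inj
      exact Eq.trans (nat _) (hpb.lift_fst _ _ _)
    · rintro k ⟨hk1, hk2⟩
      apply hpb.hom_ext
      · rw [hpb.lift_fst, ← nat k, hk1]
      · rw [hpb.lift_snd, hk2]
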